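/- Let φ be a permutation of the edge set of K_{5,5} such that whenever two edges e and f of K_{5,5} share a vertex, the edges φ(e) and φ(f) also share a vertex. Then φ is induced by a graph automorphism of K_{5,5}: there exists an automorphism τ of K_{5,5} with φ({u,v}) = {τ(u),τ(v)} for every edge {u,v}. -/

import Mathlib

open scoped BigOperators

noncomputable section

/-- Complex squared length (no conjugation). -/
def csq (d : ℕ) (x y : Fin d → ℂ) : ℂ := ∑ k, (x k - y k) ^ 2

lemma csq_comm (d : ℕ) (x y : Fin d → ℂ) : csq d x y = csq d y x := by
  unfold csq; congr 1; funext k; ring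

/-- Squared length of an (unordered) edge under a configuration. -/
def edgeSq {V : Type*} (d : ℕ) (p : V → Fin d → ℂ) : Sym2 V → ℂ :=
  Sym2.lift ⟨fun u v => csq d (p u) (p v), fun u v => csq_comm d (p u) (p v)⟩

/-- The measurement map of a graph: a configuration goes to its vector of
squared edge lengths. -/
def measMap {V : Type*} (G : SimpleGraph V) (d : ℕ) (p : V → Fin d → ℂ) :
    G.edgeSet → ℂ := fun e => edgeSq d p (e : Sym2 V)

/-- The `d`-dimensional measurement variety of a graph: the Zariski closure
(zero locus of the vanishing ideal) of the image of the measurement map. -/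
def measVariety {V : Type*} (G : SimpleGraph V) (d : ℕ) : Set (G.edgeSet → ℂ) :=
  MvPolynomial.zeroLocus ℂ (MvPolynomial.vanishingIdeal ℂ (Set.range (measMap G d)))

/-- Row of the rigidity matrix for the ordered pair (u,v). -/
def rRowFun {V : Type*} [DecidableEq V] (p : V → Fin 3 → ℂ) (u v : V) :
    V → Fin 3 → ℂ :=
  fun w k => if w = u then 2 * (p u k - p v k)
    else if w = v then 2 * (p v k - p u k) else 0

lemma rRowFun_comm {V : Type*} [DecidableEq V] (p : V → Fin 3 → ℂ) (u v : V) :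
    rRowFun p u v = rRowFun p v u := by
  funext w k
  unfold rRowFun
  rcases eq_or_ne w u with h1 | h1 <;> rcases eq_or_ne w v with h2 | h2
  · have huv : u = v := h1.symm.trans h2
    subst huv; simp [h1]
  · have huv : u ≠ v := fun h => h2 (h1.trans h)
    simp [h1, h2, huv, huv.symm]
  · have huv : v ≠ u := fun h => h1 (h2.trans h)
    simp [h1, h2, huv, huv.symm]
  · simp [h1, h2]

/-- Row of the rigidity matrix corresponding to an unordered edge. -/
def rigidityRow {V : Type*} [DecidableEq V] (p : V → Fin 3 → ℂ) :
    Sym2 V → (V → Fin 3 → ℂ) :=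
  Sym2.lift ⟨rRowFun p, rRowFun_comm p⟩

/-- A fintype instance for edge sets over finite vertex types. -/
noncomputable instance edgeSetFintype {V : Type*} [Finite V] (G : SimpleGraph V) :
    Fintype G.edgeSet := Fintype.ofFinite _

noncomputable instance neighborSetFintype' {V : Type*} [Finite V] (G : SimpleGraph V) (v : V) :
    Fintype (G.neighborSet v) := Fintype.ofFinite _

/-- The space of equilibrium stresses of the framework `(G, p)`:
the left kernel of the rigidity matrix. -/
def stressSpace {V : Type*} [DecidableEq V] [Finite V] (G : SimpleGraph V)
    (p : V → Fin 3 → ℂ) : Submodule ℂ (G.edgeSet → ℂ) where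
  carrier := {ω | ∑ e : G.edgeSet, ω e • rigidityRow p (e : Sym2 V) = 0}
  add_mem' := by
    intro a b ha hb
    simp only [Set.mem_setOf_eq] at *
    simp only [Pi.add_apply, add_smul, Finset.sum_add_distrib, ha, hb, add_zero]
  zero_mem' := by simp
  smul_mem' := by
    intro c a ha
    simp only [Set.mem_setOf_eq] at *
    simp only [Pi.smul_apply, smul_eq_mul, mul_smul, ← Finset.smul_sum, ha, smul_zero]

/-- The span of the rows of the rigidity matrix of `(G,p)`. -/
def rowSpan {V : Type*} [DecidableEq V] (G : SimpleGraph V) (p : V → Fin 3 → ℂ) :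
    Submodule ℂ (V → Fin 3 → ℂ) :=
  Submodule.span ℂ (Set.range fun e : G.edgeSet => rigidityRow p (e : Sym2 V))

/-- The rank of the rigidity matrix of `(G,p)`. -/
def rigidityRank {V : Type*} [DecidableEq V] (G : SimpleGraph V) (p : V → Fin 3 → ℂ) : ℕ :=
  Module.finrank ℂ (rowSpan G p)

/-- `G` is a circuit of the 3-dimensional rigidity matroid: its full edge set is
dependent (for every configuration), but every proper subset of its edge set is
independent (for some configuration). -/
def IsRigidityCircuit {V : Type*} [DecidableEq V] (G : SimpleGraph V) : Prop :=
  (∀ p : V → Fin 3 → ℂ, ¬ LinearIndependent ℂ (fun e : G.edgeSet => rigidityRow p (e : Sym2 V))) ∧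
  (∀ S : Set (Sym2 V), S ⊆ G.edgeSet → S ≠ G.edgeSet →
    ∃ p : V → Fin 3 → ℂ, LinearIndependent ℂ (fun e : S => rigidityRow p (e : Sym2 V)))

/-- `G` is generically rigid in 3 dimensions. -/
def IsThreeRigid {V : Type*} [DecidableEq V] [Fintype V] (G : SimpleGraph V) : Prop :=
  ∃ p : V → Fin 3 → ℂ, rigidityRank G p = 3 * Fintype.card V - 6

/-- The complete bipartite graph `K_{5,5}`. -/
def K55 : SimpleGraph (Fin 5 ⊕ Fin 5) := completeBipartiteGraph (Fin 5) (Fin 5)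

/-- A vector is balanced if its coordinates sum to zero. -/
def IsBalanced {E : Type*} [Fintype E] (ω : E → ℂ) : Prop := ∑ e, ω e = 0

/-- The Zariski tangent space to a subset `W ⊆ ℂ^E` at a point `x`:
vectors annihilated by the differentials at `x` of all polynomials in the
vanishing ideal of `W`. -/
def zTangent {E : Type*} [Fintype E] (W : Set (E → ℂ)) (x : E → ℂ) :
    Submodule ℂ (E → ℂ) where
  carrier := {v | ∀ f ∈ MvPolynomial.vanishingIdeal ℂ W,
    ∑ e, v e * MvPolynomial.eval x (MvPolynomial.pderiv e f) = 0}
  add_mem' := by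
    intro a b ha hb
    simp only [Set.mem_setOf_eq] at *
    intro f hf
    simp only [Pi.add_apply, add_mul, Finset.sum_add_distrib, ha f hf, hb f hf, add_zero]
  zero_mem' := by simp
  smul_mem' := by
    intro c a ha
    simp only [Set.mem_setOf_eq] at *
    intro f hf
    simp only [Pi.smul_apply, smul_eq_mul, mul_assoc, ← Finset.mul_sum, ha f hf, mul_zero]

/-- Krull dimension of (the Zariski closure of) a subset of `ℂ^E`, as the Krull
dimension of its coordinate ring. -/
def varietyDim {E : Type*} (W : Set (E → ℂ)) : WithBot (WithTop ℕ) :=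
  ringKrullDim (MvPolynomial E ℂ ⧸ MvPolynomial.vanishingIdeal ℂ W)

/-- `x` is a smooth point of `W` if it lies on `W` and its Zariski tangent space
has dimension equal to the Krull dimension of `W`. -/
def IsSmoothPoint {E : Type*} [Fintype E] (W : Set (E → ℂ)) (x : E → ℂ) : Prop :=
  x ∈ W ∧ (Module.finrank ℂ (zTangent W x) : WithBot (WithTop ℕ)) = varietyDim W

/-- `ω` is a normal vector to `W` at `x`. -/
def IsNormalAt {E : Type*} [Fintype E] (W : Set (E → ℂ)) (x : E → ℂ) (ω : E → ℂ) : Prop :=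
  ∀ v ∈ zTangent W x, ∑ e, ω e * v e = 0

/-- The set `S(G)` of smooth points of a measurement variety. -/
def smoothLocus {E : Type*} [Fintype E] (W : Set (E → ℂ)) : Set (E → ℂ) :=
  {x | IsSmoothPoint W x}

/-- The set `B(G)` of smooth points all of whose normal vectors are balanced. -/
def balancedLocus {E : Type*} [Fintype E] (W : Set (E → ℂ)) : Set (E → ℂ) :=
  {x | IsSmoothPoint W x ∧ ∀ ω : E → ℂ, IsNormalAt W x ω → IsBalanced ω}


open Sum

abbrev Vtx := Fin 5 ⊕ Fin 5

lemma adj_iff (u v : Vtx) : K55.Adj u v ↔ u.isLeft ≠ v.isLeft := by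
  cases u <;> cases v <;> simp [K55]

def Epair (i j : Fin 5) : K55.edgeSet :=
  ⟨s(inl i, inr j), by simp [K55]⟩

lemma exists_pair (e : K55.edgeSet) : ∃ i j, e = Epair i j := by
  obtain ⟨e, he⟩ := e
  induction e using Sym2.ind with
  | _ u v =>
    rw [SimpleGraph.mem_edgeSet] at he
    cases u with
    | inl i => cases v with
      | inl i' => simp [K55] at he
      | inr j => exact ⟨i, j, rfl⟩
    | inr j => cases v with
      | inl i => exact ⟨i, j, Subtype.ext (Sym2.eq_swap)⟩
      | inr j' => simp [K55] at he

lemma Epair_inj {i j i' j' : Fin 5} (h : Epair i j = Epair i' j') : i = i' ∧ j = j' := by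
  have := congrArg Subtype.val h
  simp [Epair, Sym2.eq_iff] at this
  exact this

lemma share_iff (i j i' j' : Fin 5) :
    (∃ v : Vtx, v ∈ (Epair i j : Sym2 Vtx) ∧ v ∈ (Epair i' j' : Sym2 Vtx)) ↔ (i = i' ∨ j = j') := by
  simp only [Epair, Sym2.mem_iff]
  constructor
  · rintro ⟨v, (rfl|rfl), (h|h)⟩ <;> simp_all
  · rintro (rfl|rfl)
    · exact ⟨inl i, by simp⟩
    · exact ⟨inr j, by simp⟩

lemma tri {α β : Type*} {a1 a2 a3 : α} {b1 b2 b3 : β}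
    (h12 : a1 = a2 ∨ b1 = b2) (h13 : a1 = a3 ∨ b1 = b3) (h23 : a2 = a3 ∨ b2 = b3) :
    (a1 = a2 ∧ a1 = a3) ∨ (b1 = b2 ∧ b1 = b3) := by
  rcases h12 with h | h
  · rcases h13 with h' | h'
    · exact Or.inl ⟨h, h'⟩
    · rcases h23 with h'' | h''
      · exact Or.inl ⟨h, h.trans h''⟩
      · exact Or.inr ⟨h'.trans h''.symm, h'⟩
  · rcases h13 with h' | h'
    · rcases h23 with h'' | h''
      · exact Or.inl ⟨h'.trans h''.symm, h'⟩
      · exact Or.inr ⟨h, h.trans h''⟩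
    · exact Or.inr ⟨h, h'⟩

/-- A permutation of the edges of `K_{5,5}` that preserves the relation of
sharing a vertex is induced by a graph automorphism of `K_{5,5}`. -/
theorem edge_permutation_preserving_incidence_is_induced
    (φ : K55.edgeSet ≃ K55.edgeSet)
    (hφ : ∀ e f : K55.edgeSet,
      (∃ v, v ∈ (e : Sym2 (Fin 5 ⊕ Fin 5)) ∧ v ∈ (f : Sym2 (Fin 5 ⊕ Fin 5))) →
      ∃ v, v ∈ ((φ e : Sym2 (Fin 5 ⊕ Fin 5))) ∧ v ∈ ((φ f : Sym2 (Fin 5 ⊕ Fin 5)))) :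
    ∃ τ : K55 ≃g K55, ∀ e : K55.edgeSet,
      ((φ e : Sym2 (Fin 5 ⊕ Fin 5))) = Sym2.map ⇑τ (e : Sym2 (Fin 5 ⊕ Fin 5)) := by
  obtain ⟨A, B, hAB⟩ : ∃ A B : Fin 5 → Fin 5 → Fin 5,
      ∀ i j, φ (Epair i j) = Epair (A i j) (B i j) := by
    have h := fun i j => exists_pair (φ (Epair i j))
    choose A B h using h
    exact ⟨A, B, h⟩
  -- sharing transfers
  have hshare : ∀ i j i' j', (i = i' ∨ j = j') → (A i j = A i' j' ∨ B i j = B i' j') := by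
    intro i j i' j' h
    have := hφ (Epair i j) (Epair i' j') ((share_iff i j i' j').mpr h)
    rw [hAB, hAB] at this
    exact (share_iff _ _ _ _).mp this
  have hinj : ∀ i j i' j', A i j = A i' j' → B i j = B i' j' → i = i' ∧ j = j' := by
    intro i j i' j' hA hB
    have : Epair i j = Epair i' j' := φ.injective (by rw [hAB, hAB, hA, hB])
    exact Epair_inj this
  -- row lemma
  have hrow : ∀ i, (∀ j, A i j = A i 0) ∨ (∀ j, B i j = B i 0) := by
    intro i
    by_cases hA : ∀ j, A i j = A i 0
    · exact Or.inl hA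
    · push_neg at hA
      obtain ⟨j1, hj1⟩ := hA
      refine Or.inr fun j => ?_
      have h12 : A i 0 = A i j1 ∨ B i 0 = B i j1 := hshare i 0 i j1 (Or.inl rfl)
      have h13 : A i 0 = A i j ∨ B i 0 = B i j := hshare i 0 i j (Or.inl rfl)
      have h23 : A i j1 = A i j ∨ B i j1 = B i j := hshare i j1 i j (Or.inl rfl)
      rcases tri h12 h13 h23 with ⟨h, _⟩ | ⟨_, h⟩
      · exact absurd h.symm hj1
      · exact h.symm
  have hcol : ∀ j, (∀ i, A i j = A 0 j) ∨ (∀ i, B i j = B 0 j) := by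
    intro j
    by_cases hA : ∀ i, A i j = A 0 j
    · exact Or.inl hA
    · push_neg at hA
      obtain ⟨i1, hi1⟩ := hA
      refine Or.inr fun i => ?_
      have h12 : A 0 j = A i1 j ∨ B 0 j = B i1 j := hshare 0 j i1 j (Or.inr rfl)
      have h13 : A 0 j = A i j ∨ B 0 j = B i j := hshare 0 j i j (Or.inr rfl)
      have h23 : A i1 j = A i j ∨ B i1 j = B i j := hshare i1 j i j (Or.inr rfl)
      rcases tri h12 h13 h23 with ⟨h, _⟩ | ⟨_, h⟩
      · exact absurd h.symm hi1
      · exact h.symm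
  classical
  -- choose the vertex images
  have hLex : ∀ i, ∃ w : Vtx, (∃ a, w = inl a ∧ ∀ j, A i j = a) ∨
      (∃ b, w = inr b ∧ ∀ j, B i j = b) := by
    intro i
    rcases hrow i with h | h
    · exact ⟨inl (A i 0), Or.inl ⟨_, rfl, h⟩⟩
    · exact ⟨inr (B i 0), Or.inr ⟨_, rfl, h⟩⟩
  have hRex : ∀ j, ∃ w : Vtx, (∃ c, w = inl c ∧ ∀ i, A i j = c) ∨
      (∃ d, w = inr d ∧ ∀ i, B i j = d) := by
    intro j
    rcases hcol j with h | h
    · exact ⟨inl (A 0 j), Or.inl ⟨_, rfl, h⟩⟩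
    · exact ⟨inr (B 0 j), Or.inr ⟨_, rfl, h⟩⟩
  choose σL hσL using hLex
  choose σR hσR using hRex
  set τ : Vtx → Vtx := Sum.elim σL σR with hτ
  -- the key edge identity
  have hedge : ∀ i j, (φ (Epair i j) : Sym2 Vtx) = s(τ (inl i), τ (inr j)) := by
    intro i j
    have hval : (φ (Epair i j) : Sym2 Vtx) = s(inl (A i j), inr (B i j)) := by
      rw [hAB]; rfl
    rcases hσL i with ⟨a, hwa, hAa⟩ | ⟨b, hwb, hBb⟩ <;>
      rcases hσR j with ⟨c, hwc, hAc⟩ | ⟨d, hwd, hBd⟩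
    · -- both inl : impossible
      exfalso
      have hac : a = c := (hAa j).symm.trans (hAc i)
      have hBinj : Function.Injective (B i) := by
        intro j1 j2 h
        exact (hinj i j1 i j2 ((hAa j1).trans (hAa j2).symm) h).2
      obtain ⟨i', hi'⟩ := exists_ne i
      obtain ⟨j0, hj0⟩ := (Finite.injective_iff_surjective.mp hBinj) (B i' j)
      have hAeq : A i j0 = A i' j := by rw [hAa j0, hAc i', hac]
      exact hi' ((hinj i j0 i' j hAeq hj0).1).symm
    · rw [hval, hτ]
      simp only [Sum.elim_inl, Sum.elim_inr, hwa, hwd, hAa j, hBd i]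
    · rw [hval, hτ]
      simp only [Sum.elim_inl, Sum.elim_inr, hwb, hwc, hAc i, hBb j]
      exact Sym2.eq_swap
    · -- both inr : impossible
      exfalso
      have hbd : b = d := (hBb j).symm.trans (hBd i)
      have hAinj : Function.Injective (A i) := by
        intro j1 j2 h
        exact (hinj i j1 i j2 h ((hBb j1).trans (hBb j2).symm)).2
      obtain ⟨i', hi'⟩ := exists_ne i
      obtain ⟨j0, hj0⟩ := (Finite.injective_iff_surjective.mp hAinj) (A i' j)
      have hBeq : B i j0 = B i' j := by rw [hBb j0, hBd i', hbd]
      exact hi' ((hinj i j0 i' j hj0 hBeq).1).symm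
  have hval : ∀ i j, s(τ (inl i), τ (inr j)) ∈ K55.edgeSet := by
    intro i j
    rw [← hedge i j]
    exact (φ (Epair i j)).2
  have hadj : ∀ i j, K55.Adj (τ (inl i)) (τ (inr j)) := fun i j =>
    (SimpleGraph.mem_edgeSet _).mp (hval i j)
  -- injectivity of τ
  have hτinj : Function.Injective τ := by
    intro u v huv
    have key : ∀ i i' : Fin 5, τ (inl i) = τ (inl i') → i = i' := by
      intro i i' h
      have : (φ (Epair i 0) : Sym2 Vtx) = (φ (Epair i' 0) : Sym2 Vtx) := by
        rw [hedge, hedge, h]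
      exact (Epair_inj (φ.injective (Subtype.ext this))).1
    have key' : ∀ j j' : Fin 5, τ (inr j) = τ (inr j') → j = j' := by
      intro j j' h
      have : (φ (Epair 0 j) : Sym2 Vtx) = (φ (Epair 0 j') : Sym2 Vtx) := by
        rw [hedge, hedge, h]
      exact (Epair_inj (φ.injective (Subtype.ext this))).2
    have keyx : ∀ (i j : Fin 5), τ (inl i) ≠ τ (inr j) := fun i j h =>
      K55.loopless.irrefl _ (h ▸ hadj i j)
    cases u with
    | inl i => cases v with
      | inl i' => exact congrArg inl (key i i' huv)
      | inr j => exact absurd huv (keyx i j)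
    | inr j => cases v with
      | inl i => exact absurd huv.symm (keyx i j)
      | inr j' => exact congrArg inr (key' j j' huv)
  have hτbij : Function.Bijective τ := Finite.injective_iff_bijective.mp hτinj
  -- same-side lemmas
  have hside : ∀ i j, (τ (inl i)).isLeft ≠ (τ (inr j)).isLeft := fun i j =>
    (adj_iff _ _).mp (hadj i j)
  have hLL : ∀ i i', (τ (inl i)).isLeft = (τ (inl i')).isLeft := by
    intro i i'
    have h1 := hside i 0
    have h2 := hside i' 0
    revert h1 h2
    cases (τ (inl i)).isLeft <;> cases (τ (inl i')).isLeft <;>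
      cases (τ (inr 0)).isLeft <;> simp
  have hRR : ∀ j j', (τ (inr j)).isLeft = (τ (inr j')).isLeft := by
    intro j j'
    have h1 := hside 0 j
    have h2 := hside 0 j'
    revert h1 h2
    cases (τ (inr j)).isLeft <;> cases (τ (inr j')).isLeft <;>
      cases (τ (inl 0)).isLeft <;> simp
  refine ⟨⟨Equiv.ofBijective τ hτbij, ?_⟩, ?_⟩
  · intro u v
    show K55.Adj (τ u) (τ v) ↔ K55.Adj u v
    rw [adj_iff, adj_iff]
    cases u with
    | inl i => cases v with
      | inl i' => simp [hLL i i']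
      | inr j => simp [hside i j]
    | inr j => cases v with
      | inl i => simp [(hside i j).symm, Ne.symm (hside i j)]
      | inr j' => simp [hRR j j']
  · intro e
    obtain ⟨i, j, rfl⟩ := exists_pair e
    show (φ (Epair i j) : Sym2 Vtx) = Sym2.map τ s(inl i, inr j)
    rw [Sym2.map_pair_eq, hedge]


end
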